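/- Let θ be an irrational real number and let c : 𝒟 → ℂ be a continuous function on the open unit disc 𝒟 = {z ∈ ℂ : |z| < 1} satisfying c(z) = e^{iπmθ}·c(e^{2πimθ}z) for all integers m and all z ∈ 𝒟. Then c = 0. -/

import Mathlib

open Complex Real

/-- If `θ` is irrational and a continuous function `c` on the open unit disc satisfies
`c(z) = e^{iπmθ} c(e^{2πimθ} z)` for all integers `m`, then `c = 0`. -/
theorem rotation_invariant_function_zero (θ : ℝ) (hθ : Irrational θ)
    (c : ℂ → ℂ) (hc : ContinuousOn c (Metric.ball (0 : ℂ) 1))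
    (h : ∀ m : ℤ, ∀ z ∈ Metric.ball (0 : ℂ) 1,
      c z = Complex.exp (Complex.I * (π : ℂ) * m * θ) *
        c (Complex.exp (2 * (π : ℂ) * Complex.I * m * θ) * z)) :
    ∀ z ∈ Metric.ball (0 : ℂ) 1, c z = 0 := by
  intro z hz
  -- the auxiliary function
  set F : ℝ → ℂ := fun t => Complex.exp (Complex.I * (π : ℂ) * t) *
      c (Complex.exp (2 * (π : ℂ) * Complex.I * t) * z) with hF
  have hzmem : ∀ t : ℝ, Complex.exp (2 * (π : ℂ) * Complex.I * t) * z ∈ Metric.ball (0 : ℂ) 1 := by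
    intro t
    simp only [Metric.mem_ball, dist_zero_right] at hz ⊢
    rw [norm_mul]
    have : ‖Complex.exp (2 * (π : ℂ) * Complex.I * t)‖ = 1 := by
      rw [Complex.norm_exp]
      have : (2 * (π : ℂ) * Complex.I * t).re = 0 := by simp [mul_comm, mul_assoc]
      rw [this, Real.exp_zero]
    rw [this, one_mul]; exact hz
  have hFcont : Continuous F := by
    apply Continuous.mul
    · exact Complex.continuous_exp.comp (by continuity)
    · exact hc.comp_continuous (by continuity) hzmem
  -- F (m*θ + 2*n) = c z
  have key : ∀ m n : ℤ, F (m * θ + 2 * n) = c z := by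
    intro m n
    have e1 : Complex.exp (Complex.I * (π : ℂ) * ((m * θ + 2 * n : ℝ) : ℂ)) =
        Complex.exp (Complex.I * (π : ℂ) * m * θ) := by
      push_cast
      rw [mul_add, Complex.exp_add]
      have : Complex.I * (π : ℂ) * (2 * n) = (n : ℂ) * (2 * π * Complex.I) := by ring
      rw [this, Complex.exp_int_mul_two_pi_mul_I, mul_one]
      ring_nf
    have e2 : Complex.exp (2 * (π : ℂ) * Complex.I * ((m * θ + 2 * n : ℝ) : ℂ)) =
        Complex.exp (2 * (π : ℂ) * Complex.I * m * θ) := by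
      push_cast
      rw [mul_add, Complex.exp_add]
      have : 2 * (π : ℂ) * Complex.I * (2 * n) = ((2 * n : ℤ) : ℂ) * (2 * π * Complex.I) := by
        push_cast; ring
      rw [this, Complex.exp_int_mul_two_pi_mul_I, mul_one]
      ring_nf
    rw [hF]
    simp only []
    rw [e1, e2, ← h m z hz]
  -- density of {m θ + 2 n}
  have hdense : Dense ((AddSubgroup.closure ({θ, 2} : Set ℝ) : AddSubgroup ℝ) : Set ℝ) := by
    rcases AddSubgroup.dense_or_cyclic (AddSubgroup.closure ({θ, 2} : Set ℝ)) with hd | ⟨a, ha⟩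
    · exact hd
    · exfalso
      have hθmem : θ ∈ AddSubgroup.closure ({θ, 2} : Set ℝ) :=
        AddSubgroup.subset_closure (by simp)
      have h2mem : (2 : ℝ) ∈ AddSubgroup.closure ({θ, 2} : Set ℝ) :=
        AddSubgroup.subset_closure (by simp)
      rw [ha, AddSubgroup.mem_closure_singleton] at hθmem h2mem
      obtain ⟨k, hk⟩ := hθmem
      obtain ⟨n, hn⟩ := h2mem
      have hn0 : (n : ℝ) ≠ 0 := by
        intro h0
        rw [zsmul_eq_mul, h0, zero_mul] at hn
        norm_num at hn
      have : θ = ((2 * k / n : ℚ) : ℝ) := by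
        rw [← hk, zsmul_eq_mul]
        have ha' : a = 2 / n := by
          rw [eq_div_iff hn0]; rw [zsmul_eq_mul] at hn; linarith [hn]
        rw [ha']
        push_cast
        field_simp
      exact hθ ⟨_, this.symm⟩
  -- F is constant = c z on a dense set, hence everywhere
  have hall : ∀ t : ℝ, F t = c z := by
    intro t
    have hclosed : IsClosed {x : ℝ | F x = c z} :=
      isClosed_eq hFcont continuous_const
    have hsub : ((AddSubgroup.closure ({θ, 2} : Set ℝ) : AddSubgroup ℝ) : Set ℝ) ⊆
        {x : ℝ | F x = c z} := by
      intro x hx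
      rw [SetLike.mem_coe, AddSubgroup.mem_closure_pair] at hx
      obtain ⟨m, n, hmn⟩ := hx
      have : x = m * θ + 2 * n := by
        rw [← hmn]; push_cast [zsmul_eq_mul]; ring
      rw [Set.mem_setOf_eq, this]
      exact key m n
    have := hclosed.closure_subset_iff.mpr hsub
    exact this (hdense t)
  -- evaluate at t = 1
  have h1 := hall 1
  rw [hF] at h1
  simp only [Complex.ofReal_one, mul_one] at h1
  have e3 : Complex.exp (Complex.I * (π : ℂ)) = -1 := by
    rw [mul_comm]; exact Complex.exp_pi_mul_I
  have e4 : Complex.exp (2 * (π : ℂ) * Complex.I) = 1 := by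
    exact Complex.exp_two_pi_mul_I
  rw [e3, e4, one_mul, neg_one_mul] at h1
  linear_combination (-1/2 : ℂ) * h1
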